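/- arXiv:2404.01101 — 3 statements merged into one kernel-verified Lean document; each statement's English description precedes it below -/
import Mathlib

section
/- Let N ≥ 1, let μ_c, μ_b : Fin N → ℝ, and let σ_c, σ_b > 0 satisfy σ_c − σ_b > 1 and σ_b ≤ N. Let x₁, x₂ be i.i.d. with law N(μ_c, σ_c²I_N) and x₃, x₄ be i.i.d. with law N(μ_b, σ_b²I_N). Then the expected pairwise distance of the clean pair strictly exceeds that of the backdoor pair: ∫∫ ‖x₁ − x₂‖ d(N(μ_c,σ_c²I_N) ⊗ N(μ_c,σ_c²I_N)) > ∫∫ ‖x₃ − x₄‖ d(N(μ_b,σ_b²I_N) ⊗ N(μ_b,σ_b²I_N)). -/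
open MeasureTheory ProbabilityTheory

/-- The isotropic Gaussian measure `N(μ, v·I_N)` on `EuclideanSpace ℝ (Fin N)`,
as the product of the coordinate Gaussians `gaussianReal (μ i) v`. -/
noncomputable def gaussianPi (N : ℕ) (μ : Fin N → ℝ) (v : NNReal) :
    Measure (EuclideanSpace ℝ (Fin N)) :=
  (Measure.pi fun i => gaussianReal (μ i) v).map
    (MeasurableEquiv.toLp 2 (Fin N → ℝ))

section Aux
open Real Function


lemma gaussianReal_openPos (m : ℝ) {v : NNReal} (hv : v ≠ 0) :
    (gaussianReal m v).IsOpenPosMeasure := by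
  rw [gaussianReal_of_var_ne_zero m hv]
  exact (withDensity_absolutelyContinuous' (measurable_gaussianPDF m v).aemeasurable
    (ae_of_all _ fun x => (gaussianPDF_pos m hv x).ne')).isOpenPosMeasure

lemma integrable_abs_gaussianReal : Integrable (fun x => |x|) (gaussianReal 0 1) := by
  rw [gaussianReal_of_var_ne_zero 0 one_ne_zero]
  rw [integrable_withDensity_iff (measurable_gaussianPDF 0 1)
    (ae_of_all _ fun x => ENNReal.ofReal_lt_top)]
  have h1 : Integrable (fun x : ℝ => x * rexp (-(1/2) * x ^ 2)) := by
    have := integrable_rpow_mul_exp_neg_mul_sq (b := 1/2) (by norm_num) (s := 1) (by norm_num)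
    simpa using this
  have h2 := (h1.abs.const_mul ((√(2 * π * (1:NNReal)))⁻¹))
  refine h2.mono' ?_ (ae_of_all _ fun x => ?_)
  · exact ((measurable_abs.mul ((measurable_gaussianPDF 0 1).ennreal_toReal)).aestronglyMeasurable)
  · have : (gaussianPDF 0 1 x).toReal = gaussianPDFReal 0 1 x :=
      ENNReal.toReal_ofReal (gaussianPDFReal_nonneg 0 1 x)
    rw [Real.norm_eq_abs, abs_mul, abs_abs, this, abs_of_nonneg (gaussianPDFReal_nonneg 0 1 x)]
    rw [gaussianPDFReal, abs_mul, abs_of_nonneg (Real.exp_nonneg _)]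
    apply le_of_eq
    have : -(x - 0) ^ 2 / (2 * ((1:NNReal):ℝ)) = -(1/2) * x ^ 2 := by push_cast; ring
    rw [this]; ring

lemma gauss_affine (m σ : ℝ) (hσ : 0 < σ) :
    (gaussianReal 0 1).map (fun t => m + σ * t) = gaussianReal m ((σ ^ 2).toNNReal) := by
  have h : (fun t : ℝ => m + σ * t) = (fun y => y + m) ∘ (fun t : ℝ => σ * t) := by
    funext t; simp [add_comm]
  rw [h, ← Measure.map_map (measurable_id'.add_const m) (measurable_const_mul σ),
    gaussianReal_map_const_mul, gaussianReal_map_add_const]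
  congr 1
  · ring
  · ext
    simp [Real.coe_toNNReal _ (sq_nonneg σ)]

lemma pi_gauss_affine (N : ℕ) (m : Fin N → ℝ) (σ : ℝ) (hσ : 0 < σ) :
    (Measure.pi fun _ : Fin N => gaussianReal 0 1).map (fun x i => m i + σ * x i)
      = Measure.pi fun i => gaussianReal (m i) ((σ ^ 2).toNNReal) := by
  refine (Measure.pi_eq fun s hs => ?_).symm
  have hT : Measurable (fun x : Fin N → ℝ => fun i => m i + σ * x i) :=
    measurable_pi_lambda _ fun i => by fun_prop
  rw [Measure.map_apply hT (MeasurableSet.univ_pi hs)]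
  have hpre : (fun x : Fin N → ℝ => fun i => m i + σ * x i) ⁻¹' Set.pi Set.univ s
      = Set.pi Set.univ fun i => (fun t => m i + σ * t) ⁻¹' s i := rfl
  rw [hpre, Measure.pi_pi]
  refine Finset.prod_congr rfl fun i _ => ?_
  rw [← gauss_affine (m i) σ hσ,
    Measure.map_apply (((measurable_id'.const_mul σ)).const_add (m i)) (hs i)]
noncomputable def affineT (N : ℕ) (m : Fin N → ℝ) (σ : ℝ) :
    EuclideanSpace ℝ (Fin N) → EuclideanSpace ℝ (Fin N) :=
  fun x => WithLp.toLp 2 (fun i => m i + σ * x i)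

lemma affineT_measurable (N : ℕ) (m : Fin N → ℝ) (σ : ℝ) : Measurable (affineT N m σ) := by
  have hT : Measurable (fun x : Fin N → ℝ => fun i => m i + σ * x i) :=
    measurable_pi_lambda _ fun i => by fun_prop
  exact (MeasurableEquiv.toLp 2 (Fin N → ℝ)).measurable.comp
    (hT.comp (MeasurableEquiv.toLp 2 (Fin N → ℝ)).symm.measurable)

lemma gaussianPi_affine (N : ℕ) (m : Fin N → ℝ) (σ : ℝ) (hσ : 0 < σ) :
    gaussianPi N m ((σ ^ 2).toNNReal) = (gaussianPi N 0 1).map (affineT N m σ) := by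
  unfold gaussianPi
  have hT : Measurable (fun x : Fin N → ℝ => fun i => m i + σ * x i) :=
    measurable_pi_lambda _ fun i => by fun_prop
  rw [Measure.map_map (affineT_measurable N m σ)
    (MeasurableEquiv.toLp 2 (Fin N → ℝ)).measurable]
  have h : affineT N m σ ∘ ⇑(MeasurableEquiv.toLp 2 (Fin N → ℝ))
      = ⇑(MeasurableEquiv.toLp 2 (Fin N → ℝ)) ∘ (fun x i => m i + σ * x i) := rfl
  rw [h, ← Measure.map_map (MeasurableEquiv.toLp 2 (Fin N → ℝ)).measurable hT]
  simp only [Pi.zero_apply]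
  rw [pi_gauss_affine N m σ hσ]

instance gaussianPi_prob (N : ℕ) (μ : Fin N → ℝ) (v : NNReal) :
    IsProbabilityMeasure (gaussianPi N μ v) :=
  Measure.isProbabilityMeasure_map
    (MeasurableEquiv.toLp 2 (Fin N → ℝ)).measurable.aemeasurable

lemma scale_integral (N : ℕ) (m : Fin N → ℝ) (σ : ℝ) (hσ : 0 < σ) :
    (∫ p : EuclideanSpace ℝ (Fin N) × EuclideanSpace ℝ (Fin N), ‖p.1 - p.2‖
        ∂((gaussianPi N m (σ ^ 2).toNNReal).prod (gaussianPi N m (σ ^ 2).toNNReal)))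
      = σ * ∫ p : EuclideanSpace ℝ (Fin N) × EuclideanSpace ℝ (Fin N), ‖p.1 - p.2‖
        ∂((gaussianPi N 0 1).prod (gaussianPi N 0 1)) := by
  rw [gaussianPi_affine N m σ hσ,
    Measure.map_prod_map _ _ (affineT_measurable N m σ) (affineT_measurable N m σ)]
  rw [integral_map (f := fun p : EuclideanSpace ℝ (Fin N) × EuclideanSpace ℝ (Fin N) => ‖p.1 - p.2‖) ((affineT_measurable N m σ).prodMap (affineT_measurable N m σ)).aemeasurable
    ((continuous_fst.sub continuous_snd).norm.aestronglyMeasurable)]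
  have h : ∀ p : EuclideanSpace ℝ (Fin N) × EuclideanSpace ℝ (Fin N),
      ‖(Prod.map (affineT N m σ) (affineT N m σ) p).1 - (Prod.map (affineT N m σ) (affineT N m σ) p).2‖
        = σ * ‖p.1 - p.2‖ := by
    intro p
    have hs : (Prod.map (affineT N m σ) (affineT N m σ) p).1
        - (Prod.map (affineT N m σ) (affineT N m σ) p).2 = σ • (p.1 - p.2) := by
      ext i
      simp [affineT, Prod.map]
      ring
    rw [hs, norm_smul, Real.norm_eq_abs, abs_of_pos hσ]
  simp_rw [h]
  exact integral_const_mul σ _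

lemma gaussianPi_openPos (N : ℕ) : Measure.IsOpenPosMeasure (gaussianPi N 0 1) := by
  constructor
  intro U hU hne
  unfold gaussianPi
  rw [Measure.map_apply (MeasurableEquiv.toLp 2 (Fin N → ℝ)).measurable hU.measurableSet]
  haveI : ∀ i : Fin N, Measure.IsOpenPosMeasure (gaussianReal ((0 : Fin N → ℝ) i) 1) :=
    fun i => gaussianReal_openPos 0 one_ne_zero
  have hUo : IsOpen ((MeasurableEquiv.toLp 2 (Fin N → ℝ)) ⁻¹' U) := by
    have hc : Continuous ⇑(MeasurableEquiv.toLp 2 (Fin N → ℝ)) :=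
      PiLp.continuous_toLp 2 (fun _ : Fin N => ℝ)
    exact hU.preimage hc
  refine hUo.measure_ne_zero _ ?_
  obtain ⟨x, hx⟩ := hne
  exact ⟨(MeasurableEquiv.toLp 2 (Fin N → ℝ)).symm x, by simpa using hx⟩

lemma measurePreserving_eval_pi {ι : Type*} [Fintype ι] [DecidableEq ι] {α : ι → Type*}
    [∀ i, MeasurableSpace (α i)] (ν : ∀ i, Measure (α i)) [∀ i, IsProbabilityMeasure (ν i)]
    (i : ι) : MeasurePreserving (Function.eval i) (Measure.pi ν) (ν i) := by
  refine ⟨measurable_pi_apply i, ?_⟩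
  ext s hs
  rw [Measure.map_apply (measurable_pi_apply i) hs, Set.eval_preimage, Measure.pi_pi]
  rw [Finset.prod_eq_single_of_mem i (Finset.mem_univ i)
    (fun j _ hj => by rw [Function.update_of_ne hj]; exact measure_univ)]
  rw [Function.update_self]

lemma integrable_norm_gaussianPi (N : ℕ) :
    Integrable (fun x : EuclideanSpace ℝ (Fin N) => ‖x‖) (gaussianPi N 0 1) := by
  unfold gaussianPi
  rw [integrable_map_equiv]
  have hsum : Integrable (fun x : Fin N → ℝ => ∑ i, |x i|)
      (Measure.pi fun i : Fin N => gaussianReal ((0 : Fin N → ℝ) i) 1) := by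
    refine integrable_finset_sum _ fun i _ => ?_
    have := (measurePreserving_eval_pi
      (fun i : Fin N => gaussianReal ((0 : Fin N → ℝ) i) 1) i).integrable_comp
      (g := fun t : ℝ => |t|) measurable_abs.aestronglyMeasurable
    exact this.mpr (by simpa using integrable_abs_gaussianReal)
  refine hsum.mono' ?_ (ae_of_all _ fun x => ?_)
  · exact ((PiLp.continuous_toLp 2 (fun _ : Fin N => ℝ)).norm).aestronglyMeasurable
  · simp only [Function.comp_apply, Real.norm_eq_abs, abs_norm]
    rw [EuclideanSpace.norm_eq]
    have h1 : ∀ i : Fin N,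
        ‖((MeasurableEquiv.toLp 2 (Fin N → ℝ)) x) i‖ = |x i| := fun i => rfl
    simp_rw [h1]
    have h2 : ∑ i, |x i| ^ 2 ≤ (∑ i, |x i|) ^ 2 :=
      Finset.sum_sq_le_sq_sum_of_nonneg (fun i _ => abs_nonneg _)
    calc √(∑ i, |x i| ^ 2) ≤ √((∑ i, |x i|) ^ 2) := Real.sqrt_le_sqrt h2
      _ = ∑ i, |x i| := Real.sqrt_sq (Finset.sum_nonneg fun i _ => abs_nonneg _)

lemma base_pos (N : ℕ) (hN : 1 ≤ N) :
    0 < ∫ p : EuclideanSpace ℝ (Fin N) × EuclideanSpace ℝ (Fin N), ‖p.1 - p.2‖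
        ∂((gaussianPi N 0 1).prod (gaussianPi N 0 1)) := by
  set P := gaussianPi N 0 1 with hP
  haveI := gaussianPi_openPos N
  have hf_cont : Continuous fun p : EuclideanSpace ℝ (Fin N) × EuclideanSpace ℝ (Fin N) =>
      ‖p.1 - p.2‖ := (continuous_fst.sub continuous_snd).norm
  have hint : Integrable (fun p : EuclideanSpace ℝ (Fin N) × EuclideanSpace ℝ (Fin N) =>
      ‖p.1 - p.2‖) (P.prod P) := by
    have h1 : MeasurePreserving Prod.fst (P.prod P) P := ⟨measurable_fst, by simp⟩
    have h2 : MeasurePreserving Prod.snd (P.prod P) P := ⟨measurable_snd, by simp⟩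
    have i1 := (h1.integrable_comp (g := fun x : EuclideanSpace ℝ (Fin N) => ‖x‖)
      continuous_norm.aestronglyMeasurable).mpr (integrable_norm_gaussianPi N)
    have i2 := (h2.integrable_comp (g := fun x : EuclideanSpace ℝ (Fin N) => ‖x‖)
      continuous_norm.aestronglyMeasurable).mpr (integrable_norm_gaussianPi N)
    refine (i1.add i2).mono' hf_cont.aestronglyMeasurable (ae_of_all _ fun p => ?_)
    rw [Real.norm_eq_abs, abs_of_nonneg (norm_nonneg _)]
    exact norm_sub_le _ _
  rw [integral_pos_iff_support_of_nonneg (fun p => norm_nonneg _) hint]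
  have hopen : IsOpen (Function.support
      fun p : EuclideanSpace ℝ (Fin N) × EuclideanSpace ℝ (Fin N) => ‖p.1 - p.2‖) := by
    have hs : (Function.support
        fun p : EuclideanSpace ℝ (Fin N) × EuclideanSpace ℝ (Fin N) => ‖p.1 - p.2‖)
        = (fun p : EuclideanSpace ℝ (Fin N) × EuclideanSpace ℝ (Fin N) => ‖p.1 - p.2‖) ⁻¹'
          ({0}ᶜ) := by
      ext p; simp [Function.mem_support]
    rw [hs]
    exact isOpen_compl_singleton.preimage hf_cont
  refine hopen.measure_pos _ ?_
  refine ⟨(0, (MeasurableEquiv.toLp 2 (Fin N → ℝ)) fun _ => 1), ?_⟩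
  simp only [Function.mem_support, ne_eq, norm_eq_zero, zero_sub, neg_eq_zero]
  intro h
  have h0 := congrFun (congrArg (fun y => ((MeasurableEquiv.toLp 2 (Fin N → ℝ)).symm y)) h)
    ⟨0, hN⟩
  exact one_ne_zero (h0 : (1 : ℝ) = 0)


end Aux

/-- positivity conclusion of Corollary 3: if `σc − σb > 1` and `σb ≤ N`, then
the expected pairwise distance of the clean pair strictly exceeds that of the backdoor pair. -/
theorem stmt_2 (N : ℕ) (hN : 1 ≤ N) (μc μb : Fin N → ℝ) (σc σb : ℝ)
    (hσc : 0 < σc) (hσb : 0 < σb) (hgap : σc - σb > 1) (hlin : σb ≤ (N : ℝ)) :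
    (∫ p : EuclideanSpace ℝ (Fin N) × EuclideanSpace ℝ (Fin N), ‖p.1 - p.2‖
        ∂((gaussianPi N μc (σc ^ 2).toNNReal).prod (gaussianPi N μc (σc ^ 2).toNNReal))) >
      (∫ p : EuclideanSpace ℝ (Fin N) × EuclideanSpace ℝ (Fin N), ‖p.1 - p.2‖
        ∂((gaussianPi N μb (σb ^ 2).toNNReal).prod (gaussianPi N μb (σb ^ 2).toNNReal))) := by
  rw [scale_integral N μc σc hσc, scale_integral N μb σb hσb]
  exact mul_lt_mul_of_pos_right (by linarith) (base_pos N hN)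
end

section
/- Let 0 < α < 1 and 0 < ᾱ' < 1, set β = 1 − α and ᾱ = α·ᾱ', and let ρ > 0. Then for all real x₀, x_t and x: gaussianPDFReal(√α·x, ρ²·β)(x_t) · gaussianPDFReal(√ᾱ'·x₀, ρ²·(1 − ᾱ'))(x) = gaussianPDFReal(μ̃, σ̃²)(x) · gaussianPDFReal(√ᾱ·x₀, ρ²·(1 − ᾱ))(x_t), where μ̃ = (√α·(1 − ᾱ')·x_t + √ᾱ'·β·x₀)/(1 − ᾱ) and σ̃² = ρ²·β·(1 − ᾱ')/(1 − ᾱ). -/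
open MeasureTheory ProbabilityTheory

/-- the Bayes density identity of the DDPM reverse step (at noise scale `ρ`):
`q(x_t | x_{t−1}) · q(x_{t−1} | x₀) = q(x_{t−1} | x_t, x₀) · q(x_t | x₀)` where the reverse
kernel is Gaussian with mean `μ̃ = (√α(1−ᾱ')x_t + √ᾱ'βx₀)/(1−ᾱ)` and variance
`σ̃² = ρ²β(1−ᾱ')/(1−ᾱ)`. -/
theorem stmt_10 (α αbar' : ℝ) (hα : 0 < α) (hα1 : α < 1)
    (hαbar' : 0 < αbar') (hαbar'1 : αbar' < 1)
    (β αbar : ℝ) (hβ : β = 1 - α) (hαbar : αbar = α * αbar')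
    (ρ : ℝ) (hρ : 0 < ρ) (x₀ xt x : ℝ) :
    gaussianPDFReal (Real.sqrt α * x) (ρ ^ 2 * β).toNNReal xt *
        gaussianPDFReal (Real.sqrt αbar' * x₀) (ρ ^ 2 * (1 - αbar')).toNNReal x =
      gaussianPDFReal
          ((Real.sqrt α * (1 - αbar') * xt + Real.sqrt αbar' * β * x₀) / (1 - αbar))
          (ρ ^ 2 * β * (1 - αbar') / (1 - αbar)).toNNReal x *
        gaussianPDFReal (Real.sqrt αbar * x₀) (ρ ^ 2 * (1 - αbar)).toNNReal xt := by
  have hρ2 : (0:ℝ) < ρ ^ 2 := by positivity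
  have hβ0 : (0:ℝ) < β := by rw [hβ]; linarith
  have hb0 : (0:ℝ) < 1 - αbar' := by linarith
  have hαbar0 : (0:ℝ) < 1 - αbar := by nlinarith
  have hv1 : ((ρ ^ 2 * β).toNNReal : ℝ) = ρ ^ 2 * β :=
    Real.coe_toNNReal _ (by positivity)
  have hv2 : ((ρ ^ 2 * (1 - αbar')).toNNReal : ℝ) = ρ ^ 2 * (1 - αbar') :=
    Real.coe_toNNReal _ (by positivity)
  have hv3 : ((ρ ^ 2 * β * (1 - αbar') / (1 - αbar)).toNNReal : ℝ)
      = ρ ^ 2 * β * (1 - αbar') / (1 - αbar) :=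
    Real.coe_toNNReal _ (by positivity)
  have hv4 : ((ρ ^ 2 * (1 - αbar)).toNNReal : ℝ) = ρ ^ 2 * (1 - αbar) :=
    Real.coe_toNNReal _ (by positivity)
  simp only [gaussianPDFReal, hv1, hv2, hv3, hv4]
  set a := Real.sqrt α with haa
  set b := Real.sqrt αbar' with hbb
  have ha2 : a ^ 2 = α := Real.sq_sqrt hα.le
  have hb2 : b ^ 2 = αbar' := Real.sq_sqrt hαbar'.le
  have hab : Real.sqrt αbar = a * b := by
    rw [hαbar, Real.sqrt_mul hα.le]
  rw [hab]
  have hvv : ρ ^ 2 * β * (1 - αbar') / (1 - αbar) * (ρ ^ 2 * (1 - αbar))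
      = ρ ^ 2 * β * (ρ ^ 2 * (1 - αbar')) := by
    field_simp
  have hconst : (Real.sqrt (2 * Real.pi * (ρ ^ 2 * β)))⁻¹ *
      (Real.sqrt (2 * Real.pi * (ρ ^ 2 * (1 - αbar'))))⁻¹
      = (Real.sqrt (2 * Real.pi * (ρ ^ 2 * β * (1 - αbar') / (1 - αbar))))⁻¹ *
        (Real.sqrt (2 * Real.pi * (ρ ^ 2 * (1 - αbar))))⁻¹ := by
    rw [← mul_inv, ← mul_inv, ← Real.sqrt_mul (by positivity), ← Real.sqrt_mul (by positivity)]
    congr 2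
    rw [show (2 * Real.pi * (ρ ^ 2 * β * (1 - αbar') / (1 - αbar))) *
        (2 * Real.pi * (ρ ^ 2 * (1 - αbar)))
        = (2 * Real.pi) * (2 * Real.pi) * (ρ ^ 2 * β * (1 - αbar') / (1 - αbar) * (ρ ^ 2 * (1 - αbar))) by ring, hvv]
    ring
  have hexp : Real.exp (-(xt - a * x) ^ 2 / (2 * (ρ ^ 2 * β))) *
      Real.exp (-(x - b * x₀) ^ 2 / (2 * (ρ ^ 2 * (1 - αbar')))) =
      Real.exp (-(x - (a * (1 - αbar') * xt + b * β * x₀) / (1 - αbar)) ^ 2 /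
          (2 * (ρ ^ 2 * β * (1 - αbar') / (1 - αbar)))) *
        Real.exp (-(xt - a * b * x₀) ^ 2 / (2 * (ρ ^ 2 * (1 - αbar)))) := by
    rw [← Real.exp_add, ← Real.exp_add]
    congr 1
    have h1 : αbar = a ^ 2 * b ^ 2 := by rw [ha2, hb2, hαbar]
    have h2 : β = 1 - a ^ 2 := by rw [hβ, ha2]
    have hb' : 1 - αbar' = 1 - b ^ 2 := by rw [hb2]
    rw [h1, h2, hb']
    have hA : (1 : ℝ) - a ^ 2 ≠ 0 := by rw [ha2]; intro h; linarith [hα1, (by linarith : (1:ℝ) - α = 0)]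
    have hB : (1 : ℝ) - b ^ 2 ≠ 0 := by rw [hb2]; intro h; linarith
    have hC : (1 : ℝ) - a ^ 2 * b ^ 2 ≠ 0 := by
      rw [ha2, hb2, ← hαbar]; exact hαbar0.ne'
    have hr : ρ ^ 2 ≠ 0 := hρ2.ne'
    field_simp
    ring
  calc (Real.sqrt (2 * Real.pi * (ρ ^ 2 * β)))⁻¹ *
        Real.exp (-(xt - a * x) ^ 2 / (2 * (ρ ^ 2 * β))) *
      ((Real.sqrt (2 * Real.pi * (ρ ^ 2 * (1 - αbar'))))⁻¹ *
        Real.exp (-(x - b * x₀) ^ 2 / (2 * (ρ ^ 2 * (1 - αbar')))))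
      = ((Real.sqrt (2 * Real.pi * (ρ ^ 2 * β)))⁻¹ *
        (Real.sqrt (2 * Real.pi * (ρ ^ 2 * (1 - αbar'))))⁻¹) *
        (Real.exp (-(xt - a * x) ^ 2 / (2 * (ρ ^ 2 * β))) *
        Real.exp (-(x - b * x₀) ^ 2 / (2 * (ρ ^ 2 * (1 - αbar'))))) := by ring
    _ = _ := by rw [hconst, hexp]; ring
end

section
/- Let 0 < α ≤ 1 and 0 < ᾱ' ≤ 1, set β = 1 − α and ᾱ = α·ᾱ', and let x₀, δ, c', k ∈ ℝ. Then the pushforward of gaussianReal(√ᾱ'·x₀ + c'·δ, 1 − ᾱ') ⊗ gaussianReal(0, 1) under the map (x, e) ↦ √α·x + k·δ + √β·e equals gaussianReal(√ᾱ·x₀ + (√α·c' + k)·δ, 1 − ᾱ). In particular, if √α·c' + k = √(1 − ᾱ), the resulting law is gaussianReal(√ᾱ·x₀ + √(1 − ᾱ)·δ, 1 − ᾱ). -/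
open MeasureTheory ProbabilityTheory

open MeasureTheory ProbabilityTheory Real Complex

lemma my_integrable_rexp_quadratic {b : ℝ} (hb : 0 < b) (c d : ℝ) :
    Integrable (fun x : ℝ => rexp (-b * x ^ 2 + c * x + d)) := by
  have h := (integrable_cexp_quadratic (b := (b : ℂ)) (by simpa using hb) (c : ℂ) (d : ℂ)).re
  refine h.congr (Filter.Eventually.of_forall fun x => ?_)
  show (cexp (-(b:ℂ) * (x:ℂ) ^ 2 + (c:ℂ) * (x:ℂ) + (d:ℂ))).re = rexp (-b * x ^ 2 + c * x + d)
  norm_cast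

lemma my_integral_rexp_quadratic {b : ℝ} (hb : 0 < b) (c d : ℝ) :
    ∫ x : ℝ, rexp (-b * x ^ 2 + c * x + d)
      = Real.sqrt (π / b) * rexp (d + c ^ 2 / (4 * b)) := by
  have h := integral_cexp_quadratic (b := (-b : ℂ)) (by simpa using hb) (c : ℂ) (d : ℂ)
  have heq : (fun x : ℝ => cexp ((-b : ℂ) * (x:ℂ) ^ 2 + (c:ℂ) * (x:ℂ) + (d:ℂ)))
      = fun x : ℝ => ((rexp (-b * x ^ 2 + c * x + d) : ℝ) : ℂ) := by
    funext x
    norm_cast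
  rw [heq] at h
  have h2 := (integral_ofReal (𝕜 := ℂ)
    (f := fun x : ℝ => rexp (-b * x ^ 2 + c * x + d))).symm.trans h
  have hR : ((π : ℂ) / -(-b : ℂ)) ^ (1 / 2 : ℂ) * cexp ((d:ℂ) - (c:ℂ) ^ 2 / (4 * (-b:ℂ)))
      = ((Real.sqrt (π / b) * rexp (d + c ^ 2 / (4 * b)) : ℝ) : ℂ) := by
    have h1 : ((π : ℂ) / -(-b : ℂ)) = ((π / b : ℝ) : ℂ) := by push_cast; ring
    have hsq : ((π / b : ℝ) : ℂ) ^ (1 / 2 : ℂ) = ((Real.sqrt (π / b) : ℝ) : ℂ) := by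
      rw [Real.sqrt_eq_rpow, show (1/2 : ℂ) = ((1/2 : ℝ) : ℂ) from by norm_num,
        ← Complex.ofReal_cpow (by positivity)]
    have h3 : (d:ℂ) - (c:ℂ) ^ 2 / (4 * (-b:ℂ)) = ((d + c ^ 2 / (4 * b) : ℝ) : ℂ) := by
      have hb' : (b : ℂ) ≠ 0 := by exact_mod_cast hb.ne'
      rw [mul_neg, div_neg]
      push_cast
      ring
    rw [h1, hsq, h3]
    norm_cast
  rw [hR] at h2
  exact Complex.ofReal_injective h2

open scoped NNReal ENNReal

lemma my_gaussianPDFReal_eq {v₁ v₂ : ℝ≥0} (h₁ : (0:ℝ) < v₁) (h₂ : (0:ℝ) < v₂)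
    (μ₁ μ₂ z : ℝ) (x : ℝ) :
    gaussianPDFReal μ₁ v₁ x * gaussianPDFReal (μ₂ + x) v₂ z
      = (Real.sqrt (2 * π * v₁))⁻¹ * (Real.sqrt (2 * π * v₂))⁻¹ *
        rexp (-((v₁ + v₂) / (2 * v₁ * v₂)) * x ^ 2
          + (μ₁ / v₁ + (z - μ₂) / v₂) * x
          + (-(μ₁ ^ 2 / (2 * v₁)) - (z - μ₂) ^ 2 / (2 * v₂))) := by
  unfold gaussianPDFReal
  rw [show ((Real.sqrt (2 * π * v₁))⁻¹ * rexp (-(x - μ₁) ^ 2 / (2 * v₁))) *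
      ((Real.sqrt (2 * π * v₂))⁻¹ * rexp (-(z - (μ₂ + x)) ^ 2 / (2 * v₂)))
      = (Real.sqrt (2 * π * v₁))⁻¹ * (Real.sqrt (2 * π * v₂))⁻¹ *
        (rexp (-(x - μ₁) ^ 2 / (2 * v₁)) * rexp (-(z - (μ₂ + x)) ^ 2 / (2 * v₂))) from by ring,
    ← Real.exp_add]
  congr 1
  field_simp
  ring

lemma my_gaussianPDFReal_conv {v₁ v₂ : ℝ≥0} (h₁ : v₁ ≠ 0) (h₂ : v₂ ≠ 0) (μ₁ μ₂ z : ℝ) :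
    ∫ x : ℝ, gaussianPDFReal μ₁ v₁ x * gaussianPDFReal (μ₂ + x) v₂ z
      = gaussianPDFReal (μ₁ + μ₂) (v₁ + v₂) z := by
  have hv₁ : (0:ℝ) < v₁ := lt_of_le_of_ne v₁.coe_nonneg (by exact_mod_cast h₁.symm)
  have hv₂ : (0:ℝ) < v₂ := lt_of_le_of_ne v₂.coe_nonneg (by exact_mod_cast h₂.symm)
  set V₁ : ℝ := (v₁ : ℝ) with hV₁
  set V₂ : ℝ := (v₂ : ℝ) with hV₂
  have hb : (0:ℝ) < (V₁ + V₂) / (2 * V₁ * V₂) := by positivity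
  simp_rw [my_gaussianPDFReal_eq hv₁ hv₂ μ₁ μ₂ z]
  rw [MeasureTheory.integral_const_mul, my_integral_rexp_quadratic hb]
  unfold gaussianPDFReal
  have hexp : (-(μ₁ ^ 2 / (2 * V₁)) - (z - μ₂) ^ 2 / (2 * V₂))
      + (μ₁ / V₁ + (z - μ₂) / V₂) ^ 2 / (4 * ((V₁ + V₂) / (2 * V₁ * V₂)))
      = -(z - (μ₁ + μ₂)) ^ 2 / (2 * (V₁ + V₂)) := by
    field_simp
    ring
  rw [hexp]
  have hpre : (Real.sqrt (2 * π * V₁))⁻¹ * (Real.sqrt (2 * π * V₂))⁻¹ *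
      Real.sqrt (π / ((V₁ + V₂) / (2 * V₁ * V₂)))
      = (Real.sqrt (2 * π * (V₁ + V₂)))⁻¹ := by
    have hrad : π / ((V₁ + V₂) / (2 * V₁ * V₂))
        = (2 * π * V₁) * (2 * π * V₂) / (2 * π * (V₁ + V₂)) := by
      field_simp
    rw [hrad, Real.sqrt_div (by positivity) _]
    · rw [Real.sqrt_mul (x := 2 * π * V₁) (by positivity)]
      have s1 : (0:ℝ) < Real.sqrt (2 * π * V₁) := Real.sqrt_pos.mpr (by positivity)
      have s2 : (0:ℝ) < Real.sqrt (2 * π * V₂) := Real.sqrt_pos.mpr (by positivity)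
      have s3 : (0:ℝ) < Real.sqrt (2 * π * (V₁ + V₂)) := Real.sqrt_pos.mpr (by positivity)
      generalize Real.sqrt (2 * π * V₁) = A at s1 ⊢
      generalize Real.sqrt (2 * π * V₂) = B at s2 ⊢
      generalize Real.sqrt (2 * π * (V₁ + V₂)) = C at s3 ⊢
      field_simp
  push_cast
  rw [← mul_assoc, hpre]

lemma my_lintegral_gaussianPDF_conv {v₁ v₂ : ℝ≥0} (h₁ : v₁ ≠ 0) (h₂ : v₂ ≠ 0) (μ₁ μ₂ z : ℝ) :
    ∫⁻ x : ℝ, gaussianPDF μ₁ v₁ x * gaussianPDF (μ₂ + x) v₂ z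
      = gaussianPDF (μ₁ + μ₂) (v₁ + v₂) z := by
  have hv₁ : (0:ℝ) < v₁ := lt_of_le_of_ne v₁.coe_nonneg (by exact_mod_cast h₁.symm)
  have hv₂ : (0:ℝ) < v₂ := lt_of_le_of_ne v₂.coe_nonneg (by exact_mod_cast h₂.symm)
  have hint : Integrable (fun x : ℝ => gaussianPDFReal μ₁ v₁ x * gaussianPDFReal (μ₂ + x) v₂ z)
      := by
    have hb : (0:ℝ) < ((v₁:ℝ) + v₂) / (2 * v₁ * v₂) := by positivity
    have := (my_integrable_rexp_quadratic hb
      (μ₁ / v₁ + (z - μ₂) / v₂) (-(μ₁ ^ 2 / (2 * (v₁:ℝ))) - (z - μ₂) ^ 2 / (2 * v₂))).const_mul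
      ((Real.sqrt (2 * π * v₁))⁻¹ * (Real.sqrt (2 * π * v₂))⁻¹)
    refine this.congr (Filter.Eventually.of_forall fun x => ?_)
    exact (my_gaussianPDFReal_eq hv₁ hv₂ μ₁ μ₂ z x).symm
  unfold gaussianPDF
  calc ∫⁻ x : ℝ, ENNReal.ofReal (gaussianPDFReal μ₁ v₁ x)
        * ENNReal.ofReal (gaussianPDFReal (μ₂ + x) v₂ z)
      = ∫⁻ x : ℝ, ENNReal.ofReal (gaussianPDFReal μ₁ v₁ x * gaussianPDFReal (μ₂ + x) v₂ z) := by
        congr 1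
        funext x
        rw [ENNReal.ofReal_mul (gaussianPDFReal_nonneg _ _ _)]
    _ = ENNReal.ofReal (∫ x : ℝ, gaussianPDFReal μ₁ v₁ x * gaussianPDFReal (μ₂ + x) v₂ z) := by
        rw [← ofReal_integral_eq_lintegral_ofReal hint (Filter.Eventually.of_forall fun x =>
          mul_nonneg (gaussianPDFReal_nonneg _ _ _) (gaussianPDFReal_nonneg _ _ _))]
    _ = ENNReal.ofReal (gaussianPDFReal (μ₁ + μ₂) (v₁ + v₂) z) := by
        rw [my_gaussianPDFReal_conv h₁ h₂]

lemma my_gaussianPDF_measurable_pair (μ₂ : ℝ) (v₂ : ℝ≥0) :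
    Measurable (fun p : ℝ × ℝ => gaussianPDF (μ₂ + p.1) v₂ p.2) := by
  apply ENNReal.measurable_ofReal.comp
  show Measurable fun p : ℝ × ℝ => gaussianPDFReal (μ₂ + p.1) v₂ p.2
  unfold gaussianPDFReal
  fun_prop

lemma my_gaussianReal_conv (μ₁ μ₂ : ℝ) (v₁ v₂ : ℝ≥0) :
    ((gaussianReal μ₁ v₁).prod (gaussianReal μ₂ v₂)).map (fun p : ℝ × ℝ => p.1 + p.2)
      = gaussianReal (μ₁ + μ₂) (v₁ + v₂) := by
  by_cases h₂ : v₂ = 0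
  · subst h₂
    rw [gaussianReal_zero_var, MeasureTheory.Measure.prod_dirac,
      MeasureTheory.Measure.map_map (by fun_prop) (by fun_prop)]
    have : ((fun p : ℝ × ℝ => p.1 + p.2) ∘ fun x : ℝ => (x, μ₂)) = (· + μ₂) := rfl
    rw [this, gaussianReal_map_add_const, add_zero]
  by_cases h₁ : v₁ = 0
  · subst h₁
    rw [gaussianReal_zero_var, MeasureTheory.Measure.dirac_prod,
      MeasureTheory.Measure.map_map (by fun_prop) (by fun_prop)]
    have : ((fun p : ℝ × ℝ => p.1 + p.2) ∘ Prod.mk μ₁) = (μ₁ + ·) := rfl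
    rw [this, gaussianReal_map_const_add, zero_add, add_comm μ₂ μ₁]
  have hv : v₁ + v₂ ≠ 0 := by simp [h₁, h₂]
  ext s hs
  have hadd : Measurable (fun p : ℝ × ℝ => p.1 + p.2) := measurable_fst.add measurable_snd
  rw [MeasureTheory.Measure.map_apply hadd hs,
    MeasureTheory.Measure.prod_apply (hadd hs)]
  have hslice : ∀ x : ℝ, (gaussianReal μ₂ v₂) (Prod.mk x ⁻¹' ((fun p : ℝ × ℝ => p.1 + p.2) ⁻¹' s))
      = ∫⁻ z in s, gaussianPDF (μ₂ + x) v₂ z := by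
    intro x
    have hpre : (Prod.mk x ⁻¹' ((fun p : ℝ × ℝ => p.1 + p.2) ⁻¹' s)) = (x + ·) ⁻¹' s := rfl
    rw [hpre, ← MeasureTheory.Measure.map_apply (measurable_const_add x) hs,
      gaussianReal_map_const_add, gaussianReal_apply _ h₂ s]
  simp_rw [hslice]
  have hG : Measurable (Function.uncurry fun x z : ℝ => gaussianPDF (μ₂ + x) v₂ z) :=
    my_gaussianPDF_measurable_pair μ₂ v₂
  have hmeas : Measurable fun x : ℝ => ∫⁻ z in s, gaussianPDF (μ₂ + x) v₂ z :=
    hG.lintegral_prod_right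
  rw [gaussianReal_of_var_ne_zero _ h₁,
    MeasureTheory.lintegral_withDensity_eq_lintegral_mul _ (measurable_gaussianPDF _ _) hmeas]
  have hswap : ∫⁻ x : ℝ, gaussianPDF μ₁ v₁ x * ∫⁻ z in s, gaussianPDF (μ₂ + x) v₂ z
      = ∫⁻ z in s, ∫⁻ x : ℝ, gaussianPDF μ₁ v₁ x * gaussianPDF (μ₂ + x) v₂ z := by
    have hx : ∀ x : ℝ, gaussianPDF μ₁ v₁ x * ∫⁻ z in s, gaussianPDF (μ₂ + x) v₂ z
        = ∫⁻ z in s, gaussianPDF μ₁ v₁ x * gaussianPDF (μ₂ + x) v₂ z := fun x =>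
      (MeasureTheory.lintegral_const_mul _ (hG.comp measurable_prodMk_left)).symm
    simp_rw [hx]
    exact MeasureTheory.lintegral_lintegral_swap
      (((measurable_gaussianPDF μ₁ v₁).comp measurable_fst).mul hG).aemeasurable
  calc (∫⁻ x : ℝ, (gaussianPDF μ₁ v₁ * fun x => ∫⁻ z in s, gaussianPDF (μ₂ + x) v₂ z) x)
      = ∫⁻ x : ℝ, gaussianPDF μ₁ v₁ x * ∫⁻ z in s, gaussianPDF (μ₂ + x) v₂ z := rfl
    _ = ∫⁻ z in s, ∫⁻ x : ℝ, gaussianPDF μ₁ v₁ x * gaussianPDF (μ₂ + x) v₂ z := hswap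
    _ = ∫⁻ z in s, gaussianPDF (μ₁ + μ₂) (v₁ + v₂) z := by
        apply MeasureTheory.lintegral_congr fun z => ?_
        exact my_lintegral_gaussianPDF_conv h₁ h₂ μ₁ μ₂ z
    _ = (gaussianReal (μ₁ + μ₂) (v₁ + v₂)) s := (gaussianReal_apply _ hv s).symm

/-- one-step propagation of the backdoor forward marginal: the pushforward of
`N(√ᾱ'·x₀ + c'·δ, 1−ᾱ') ⊗ N(0, 1)` under `(x, e) ↦ √α·x + k·δ + √β·e` equals
`N(√ᾱ·x₀ + (√α·c' + k)·δ, 1−ᾱ)`; in particular, if `√α·c' + k = √(1−ᾱ)`, the resulting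
law is `N(√ᾱ·x₀ + √(1−ᾱ)·δ, 1−ᾱ)`. -/
theorem stmt_12 (α αbar' : ℝ) (hα : 0 < α) (hα1 : α ≤ 1)
    (hαbar' : 0 < αbar') (hαbar'1 : αbar' ≤ 1)
    (β αbar : ℝ) (hβ : β = 1 - α) (hαbar : αbar = α * αbar')
    (x₀ δ c' k : ℝ) :
    ((gaussianReal (Real.sqrt αbar' * x₀ + c' * δ) (1 - αbar').toNNReal).prod
          (gaussianReal 0 1)).map
          (fun p : ℝ × ℝ => Real.sqrt α * p.1 + k * δ + Real.sqrt β * p.2) =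
        gaussianReal (Real.sqrt αbar * x₀ + (Real.sqrt α * c' + k) * δ)
          (1 - αbar).toNNReal ∧
      (Real.sqrt α * c' + k = Real.sqrt (1 - αbar) →
        ((gaussianReal (Real.sqrt αbar' * x₀ + c' * δ) (1 - αbar').toNNReal).prod
            (gaussianReal 0 1)).map
            (fun p : ℝ × ℝ => Real.sqrt α * p.1 + k * δ + Real.sqrt β * p.2) =
          gaussianReal (Real.sqrt αbar * x₀ + Real.sqrt (1 - αbar) * δ)
            (1 - αbar).toNNReal) := by
  have hmain : ((gaussianReal (Real.sqrt αbar' * x₀ + c' * δ) (1 - αbar').toNNReal).prod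
          (gaussianReal 0 1)).map
          (fun p : ℝ × ℝ => Real.sqrt α * p.1 + k * δ + Real.sqrt β * p.2) =
        gaussianReal (Real.sqrt αbar * x₀ + (Real.sqrt α * c' + k) * δ)
          (1 - αbar).toNNReal := by
    have hT : (fun p : ℝ × ℝ => Real.sqrt α * p.1 + k * δ + Real.sqrt β * p.2)
        = (· + k * δ) ∘ ((fun p : ℝ × ℝ => p.1 + p.2)
            ∘ Prod.map (fun x => Real.sqrt α * x) (fun x => Real.sqrt β * x)) := by
      funext p
      simp [Prod.map]
      ring
    rw [hT, ← MeasureTheory.Measure.map_map (measurable_add_const (k * δ))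
        ((show Measurable (fun p : ℝ × ℝ => p.1 + p.2) from measurable_fst.add measurable_snd).comp
          ((measurable_const_mul _).prodMap (measurable_const_mul _))),
      ← MeasureTheory.Measure.map_map (show Measurable (fun p : ℝ × ℝ => p.1 + p.2) from measurable_fst.add measurable_snd)
        ((measurable_const_mul _).prodMap (measurable_const_mul _)),
      ← MeasureTheory.Measure.map_prod_map _ _ (measurable_const_mul _) (measurable_const_mul _),
      gaussianReal_map_const_mul, gaussianReal_map_const_mul, my_gaussianReal_conv,
      gaussianReal_map_add_const]
    have hmean : Real.sqrt α * (Real.sqrt αbar' * x₀ + c' * δ) + Real.sqrt β * 0 + k * δ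
        = Real.sqrt αbar * x₀ + (Real.sqrt α * c' + k) * δ := by
      rw [hαbar, Real.sqrt_mul hα.le]
      ring
    rw [hmean]
    congr 1
    apply NNReal.coe_injective
    push_cast
    rw [Real.sq_sqrt hα.le, Real.sq_sqrt (by linarith : (0:ℝ) ≤ β),
      Real.coe_toNNReal _ (by linarith : (0:ℝ) ≤ 1 - αbar'),
      Real.coe_toNNReal _ (by nlinarith : (0:ℝ) ≤ 1 - αbar)]
    rw [hβ, hαbar]
    ring
  refine ⟨hmain, fun h => ?_⟩
  rw [hmain, h]
end
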